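/- Counterexample computation: Let G be the half-line graph with V = ℕ \ {0,1}, n ∼ n+1, vertex weight ω_n = 1/(n log n), conductance c ≡ 1 on edges, so a_{n,n+1} = n(n+1) log n · log(n+1). Then 1/√(a_{n,n+1}) ∼ 1/(n log n) as n → ∞, hence Σ_k 1/√(a_{k,k+1}) = ∞ and the path metric δ_a is complete, while the potential W(n) = 2n²log²n − n log n[(n+1)log(n+1) + (n−1)log(n−1)] satisfies W(n) ∼ −log n, so W is unbounded below. -/

import Mathlib

open Finset Filter Topology

/-- The edge weight `a_{n,n+1} = c/(ω_n ω_{n+1}) = n(n+1)·log n·log(n+1)` of the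
half-line graph with `ω_n = 1/(n log n)` and `c ≡ 1`. -/
noncomputable def aHL (n : ℕ) : ℝ :=
  (n : ℝ) * ((n : ℝ) + 1) * Real.log n * Real.log ((n : ℝ) + 1)

/-- The potential `W(n) = 2n²log²n − n·log n·[(n+1)log(n+1) + (n−1)log(n−1)]`. -/
noncomputable def WHL (n : ℕ) : ℝ :=
  2 * (n : ℝ) ^ 2 * (Real.log n) ^ 2 -
    (n : ℝ) * Real.log n *
      (((n : ℝ) + 1) * Real.log ((n : ℝ) + 1) + ((n : ℝ) - 1) * Real.log ((n : ℝ) - 1))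

/-- `Σ 1/((n+1) log (n+1))` diverges, by Cauchy condensation. -/
lemma not_summable_gHL :
    ¬ Summable (fun n : ℕ => 1 / (((n : ℝ) + 1) * Real.log ((n : ℝ) + 1))) := by
  set g : ℕ → ℝ := fun n => 1 / (((n : ℝ) + 1) * Real.log ((n : ℝ) + 1)) with hgdef
  intro hs
  have hnonneg : ∀ n, 0 ≤ g n := by
    intro n
    have h1 : (0:ℝ) ≤ Real.log ((n : ℝ) + 1) :=
      Real.log_nonneg (by have := Nat.cast_nonneg (α := ℝ) n; linarith)
    have h2 : (0:ℝ) ≤ (n : ℝ) + 1 := by positivity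
    simp only [hgdef]
    positivity
  have hmono : ∀ ⦃m n : ℕ⦄, 0 < m → m ≤ n → g n ≤ g m := by
    intro m n hm hmn
    have hm1 : (1:ℝ) ≤ (m : ℝ) := by exact_mod_cast hm
    have hmn' : (m : ℝ) ≤ (n : ℝ) := by exact_mod_cast hmn
    have hLm : 0 < Real.log ((m : ℝ) + 1) := Real.log_pos (by linarith)
    have hdm : 0 < ((m : ℝ) + 1) * Real.log ((m : ℝ) + 1) := by positivity
    refine one_div_le_one_div_of_le hdm ?_
    have hle : Real.log ((m : ℝ) + 1) ≤ Real.log ((n : ℝ) + 1) :=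
      Real.log_le_log (by linarith) (by linarith)
    exact mul_le_mul (by linarith) hle hLm.le (by linarith)
  have hcond : Summable (fun k : ℕ => (2:ℝ) ^ k * g (2 ^ k)) :=
    (summable_condensed_iff_of_nonneg hnonneg hmono).mpr hs
  -- lower bound condensed terms by a multiple of the harmonic series
  have hle : ∀ k : ℕ, (1 / (2 * Real.log 2)) * (1 / ((k : ℝ) + 1)) ≤ (2:ℝ) ^ k * g (2 ^ k) := by
    intro k
    have hl2 : (0:ℝ) < Real.log 2 := Real.log_pos (by norm_num)
    have hpow : (((2 ^ k : ℕ) : ℝ)) = (2:ℝ) ^ k := by push_cast; ring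
    have hp : (0:ℝ) < (2:ℝ) ^ k := by positivity
    have hone : (1:ℝ) ≤ (2:ℝ) ^ k := one_le_pow₀ (by norm_num)
    have hLk : 0 < Real.log ((2:ℝ) ^ k + 1) := Real.log_pos (by linarith)
    have hub : ((2:ℝ) ^ k + 1) * Real.log ((2:ℝ) ^ k + 1)
        ≤ (2 * (2:ℝ) ^ k) * (((k : ℝ) + 1) * Real.log 2) := by
      have h1 : (2:ℝ) ^ k + 1 ≤ 2 * (2:ℝ) ^ k := by linarith
      have h2 : Real.log ((2:ℝ) ^ k + 1) ≤ ((k : ℝ) + 1) * Real.log 2 := by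
        have : ((2:ℝ) ^ k + 1) ≤ (2:ℝ) ^ (k + 1) := by
          rw [pow_succ]; linarith
        calc Real.log ((2:ℝ) ^ k + 1) ≤ Real.log ((2:ℝ) ^ (k+1)) :=
              Real.log_le_log (by positivity) this
          _ = ((k : ℝ) + 1) * Real.log 2 := by
              rw [Real.log_pow]; push_cast; ring
      exact mul_le_mul h1 h2 hLk.le (by positivity)
    have heq : (1 / (2 * Real.log 2)) * (1 / ((k : ℝ) + 1))
        = (2:ℝ) ^ k / ((2 * (2:ℝ) ^ k) * (((k : ℝ) + 1) * Real.log 2)) := by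
      have hk1 : ((k:ℝ) + 1) ≠ 0 := by positivity
      field_simp
    rw [heq, hgdef]
    simp only [hpow, mul_one_div]
    gcongr
  have hsum1 : Summable (fun k : ℕ => (1 / (2 * Real.log 2)) * (1 / ((k : ℝ) + 1))) := by
    refine Summable.of_nonneg_of_le (fun k => ?_) hle hcond
    have hl2 : (0:ℝ) < Real.log 2 := Real.log_pos (by norm_num)
    positivity
  have hl2 : (0:ℝ) < Real.log 2 := Real.log_pos (by norm_num)
  have hsum2 : Summable (fun k : ℕ => 1 / ((k : ℝ) + 1)) := by
    have := hsum1.mul_left (2 * Real.log 2)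
    refine this.congr fun k => ?_
    field_simp
  have hsum3 : Summable (fun k : ℕ => 1 / ((k : ℝ) : ℝ)) := by
    refine (summable_nat_add_iff 1).mp ?_
    refine hsum2.congr fun k => ?_
    push_cast; ring
  exact Real.not_summable_one_div_natCast hsum3

set_option maxHeartbeats 1000000 in
theorem stmt15 :
    Tendsto (fun n : ℕ => (1 / Real.sqrt (aHL n)) / (1 / ((n : ℝ) * Real.log n)))
        atTop (𝓝 1) ∧
    Tendsto (fun n : ℕ => ∑ k ∈ Finset.Icc 2 n, 1 / Real.sqrt (aHL k)) atTop atTop ∧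
    Tendsto (fun n : ℕ => WHL n / (-Real.log n)) atTop (𝓝 1) ∧
    ∀ M : ℝ, ∃ n : ℕ, WHL n < M := by
  -- log n / log (n+1) → 1
  have hlograt : Tendsto (fun n : ℕ => Real.log n / Real.log ((n : ℝ) + 1)) atTop (𝓝 1) := by
    have hM : Tendsto (fun n : ℕ => Real.log ((n : ℝ) + 1)) atTop atTop :=
      Real.tendsto_log_atTop.comp
        (tendsto_atTop_add_const_right _ 1 tendsto_natCast_atTop_atTop)
    have ha : Tendsto (fun n : ℕ => Real.log (1 + 1 / (n : ℝ))) atTop (𝓝 0) := by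
      have h1 : Tendsto (fun n : ℕ => 1 + 1 / (n : ℝ)) atTop (𝓝 1) := by
        simpa using tendsto_const_nhds.add (tendsto_one_div_atTop_nhds_zero_nat (𝕜 := ℝ))
      have h2 := ((Real.continuousAt_log (by norm_num : (1:ℝ) ≠ 0)).tendsto).comp h1
      simpa [Function.comp_def] using h2
    have hb : Tendsto (fun n : ℕ => (Real.log ((n : ℝ) + 1))⁻¹) atTop (𝓝 0) :=
      hM.inv_tendsto_atTop
    have h0 : Tendsto
        (fun n : ℕ => 1 - Real.log (1 + 1 / (n : ℝ)) * (Real.log ((n : ℝ) + 1))⁻¹)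
        atTop (𝓝 1) := by
      have h5 : Tendsto (fun _ : ℕ => (1:ℝ)) atTop (𝓝 1) := tendsto_const_nhds
      have := h5.sub (ha.mul hb)
      simpa using this
    refine h0.congr' ?_
    filter_upwards [eventually_ge_atTop 2] with n hn
    have hx : (2:ℝ) ≤ (n : ℝ) := by exact_mod_cast hn
    have hx0 : (0:ℝ) < (n : ℝ) := by linarith
    have hM0 : 0 < Real.log ((n : ℝ) + 1) := Real.log_pos (by linarith)
    have he : (1:ℝ) + 1 / (n : ℝ) = ((n : ℝ) + 1) / (n : ℝ) := by field_simp
    rw [he, Real.log_div (by linarith) (by linarith)]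
    field_simp
    ring
  -- Part 1
  have h1 : Tendsto (fun n : ℕ => (1 / Real.sqrt (aHL n)) / (1 / ((n : ℝ) * Real.log n)))
      atTop (𝓝 1) := by
    have hs : Tendsto
        (fun n : ℕ => ((n : ℝ) / ((n : ℝ) + 1)) * (Real.log n / Real.log ((n : ℝ) + 1)))
        atTop (𝓝 1) := by
      simpa using (tendsto_natCast_div_add_atTop (1:ℝ)).mul hlograt
    have hsq : Tendsto
        (fun n : ℕ => Real.sqrt (((n : ℝ) / ((n : ℝ) + 1)) * (Real.log n / Real.log ((n : ℝ) + 1))))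
        atTop (𝓝 1) := by
      have := (Real.continuous_sqrt.tendsto 1).comp hs
      simpa [Function.comp_def] using this
    refine hsq.congr' ?_
    filter_upwards [eventually_ge_atTop 2] with n hn
    have hx : (2:ℝ) ≤ (n : ℝ) := by exact_mod_cast hn
    have hx0 : (0:ℝ) < (n : ℝ) := by linarith
    have hL : 0 < Real.log n := Real.log_pos (by linarith)
    have hM : 0 < Real.log ((n : ℝ) + 1) := Real.log_pos (by linarith)
    have ha : 0 < aHL n :=
      mul_pos (mul_pos (mul_pos hx0 (by linarith)) hL) hM
    have key : ((n : ℝ) / ((n : ℝ) + 1)) * (Real.log n / Real.log ((n : ℝ) + 1))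
        = ((n : ℝ) * Real.log n) ^ 2 / aHL n := by
      unfold aHL
      field_simp
    have hxL : (0:ℝ) ≤ (n : ℝ) * Real.log n := (mul_pos hx0 hL).le
    have hs0 : Real.sqrt (aHL n) ≠ 0 := (Real.sqrt_pos.mpr ha).ne'
    have hxL0 : (n : ℝ) * Real.log n ≠ 0 := (mul_pos hx0 hL).ne'
    rw [key, Real.sqrt_div (by positivity) _, Real.sqrt_sq hxL,
      one_div ((n : ℝ) * Real.log n), div_inv_eq_mul, one_div_mul_eq_div]
  -- Part 2
  have hfnonneg : ∀ n : ℕ, 0 ≤ 1 / Real.sqrt (aHL n) := fun n => by positivity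
  have hns : ¬ Summable (fun n : ℕ => 1 / Real.sqrt (aHL n)) := by
    intro hs
    have h2 : Summable (fun n : ℕ => 1 / Real.sqrt (aHL (n + 2))) :=
      (summable_nat_add_iff 2).mpr hs
    have h3 : Summable
        (fun n : ℕ => 1 / ((((n + 2 : ℕ) : ℝ)) + 1) / Real.log (((n + 2 : ℕ) : ℝ) + 1)) := by
      refine Summable.of_nonneg_of_le (fun n => ?_) (fun n => ?_) h2
      · have : (0:ℝ) ≤ Real.log (((n + 2 : ℕ) : ℝ) + 1) :=
          Real.log_nonneg (by push_cast; linarith [Nat.cast_nonneg (α := ℝ) n])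
        positivity
      · set m : ℕ := n + 2 with hm
        have hx : (2:ℝ) ≤ (m : ℝ) := by
          have : 2 ≤ m := by omega
          exact_mod_cast this
        have hx0 : (0:ℝ) < (m : ℝ) := by linarith
        have hL : 0 < Real.log (m : ℝ) := Real.log_pos (by linarith)
        have hM : 0 < Real.log ((m : ℝ) + 1) := Real.log_pos (by linarith)
        have ha : 0 < aHL m :=
          mul_pos (mul_pos (mul_pos hx0 (by linarith)) hL) hM
        have hub : aHL m ≤ (((m : ℝ) + 1) * Real.log ((m : ℝ) + 1)) ^ 2 := by
          unfold aHL
          have hlogle : Real.log (m : ℝ) ≤ Real.log ((m : ℝ) + 1) :=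
            Real.log_le_log hx0 (by linarith)
          have hstep1 : Real.log (m : ℝ) * Real.log ((m : ℝ) + 1)
              ≤ Real.log ((m : ℝ) + 1) * Real.log ((m : ℝ) + 1) :=
            mul_le_mul_of_nonneg_right hlogle hM.le
          have hstep2 : (m : ℝ) * ((m : ℝ) + 1) ≤ ((m : ℝ) + 1) * ((m : ℝ) + 1) := by nlinarith
          calc (m : ℝ) * ((m : ℝ) + 1) * Real.log (m : ℝ) * Real.log ((m : ℝ) + 1)
              = ((m : ℝ) * ((m : ℝ) + 1)) * (Real.log (m : ℝ) * Real.log ((m : ℝ) + 1)) := by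
                ring
            _ ≤ (((m : ℝ) + 1) * ((m : ℝ) + 1))
                * (Real.log ((m : ℝ) + 1) * Real.log ((m : ℝ) + 1)) :=
                mul_le_mul hstep2 hstep1 (mul_nonneg hL.le hM.le) (by positivity)
            _ = (((m : ℝ) + 1) * Real.log ((m : ℝ) + 1)) ^ 2 := by ring
        have hsq : Real.sqrt (aHL m) ≤ ((m : ℝ) + 1) * Real.log ((m : ℝ) + 1) := by
          calc Real.sqrt (aHL m) ≤ Real.sqrt ((((m : ℝ) + 1) * Real.log ((m : ℝ) + 1)) ^ 2) :=
                Real.sqrt_le_sqrt hub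
            _ = ((m : ℝ) + 1) * Real.log ((m : ℝ) + 1) := Real.sqrt_sq (by positivity)
        have := one_div_le_one_div_of_le (Real.sqrt_pos.mpr ha) hsq
        calc 1 / (((m : ℝ)) + 1) / Real.log ((m : ℝ) + 1)
            = 1 / (((m : ℝ) + 1) * Real.log ((m : ℝ) + 1)) := by
              rw [div_div]
          _ ≤ 1 / Real.sqrt (aHL m) := by
              refine one_div_le_one_div_of_le (Real.sqrt_pos.mpr ha) hsq
    have h4 : Summable (fun n : ℕ => 1 / (((n : ℝ)) + 1) / Real.log ((n : ℝ) + 1)) :=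
      (summable_nat_add_iff 2).mp h3
    refine not_summable_gHL ?_
    refine h4.congr fun n => ?_
    rw [div_div]
  have hsum : Tendsto (fun n : ℕ => ∑ i ∈ Finset.range n, 1 / Real.sqrt (aHL i))
      atTop atTop := (not_summable_iff_tendsto_nat_atTop_of_nonneg hfnonneg).mp hns
  have h2 : Tendsto (fun n : ℕ => ∑ k ∈ Finset.Icc 2 n, 1 / Real.sqrt (aHL k))
      atTop atTop := by
    have hcomp := hsum.comp (tendsto_add_atTop_nat 1)
    refine hcomp.congr' ?_
    filter_upwards [eventually_ge_atTop 1] with n hn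
    have hIcc : Finset.Icc 2 n = Finset.Ico 2 (n + 1) := by
      rw [Finset.Ico_add_one_right_eq_Icc]
    have hzero : ∑ i ∈ Finset.range 2, 1 / Real.sqrt (aHL i) = 0 := by
      have h0 : aHL 0 = 0 := by simp [aHL]
      have h1 : aHL 1 = 0 := by simp [aHL]
      simp [Finset.sum_range_succ, h0, h1]
    simp only [Function.comp]
    rw [hIcc, Finset.sum_Ico_eq_sub _ (by omega), hzero, sub_zero]
  -- Part 3
  have h3 : Tendsto (fun n : ℕ => WHL n / (-Real.log n)) atTop (𝓝 1) := by
    have hpow2 : Tendsto (fun n : ℕ => ((n : ℝ)) ^ 2) atTop atTop :=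
      (tendsto_pow_atTop (by norm_num : (2:ℕ) ≠ 0)).comp tendsto_natCast_atTop_atTop
    have hA : Tendsto (fun n : ℕ => ((n : ℝ) ^ 2) * Real.log (1 + (-1) / ((n : ℝ) ^ 2)))
        atTop (𝓝 (-1)) :=
      (Real.tendsto_mul_log_one_add_div_atTop (-1)).comp hpow2
    have hB : Tendsto (fun n : ℕ => (n : ℝ) * Real.log (1 + 1 / (n : ℝ))) atTop (𝓝 1) :=
      (Real.tendsto_mul_log_one_add_div_atTop 1).comp tendsto_natCast_atTop_atTop
    have hC : Tendsto (fun n : ℕ => (n : ℝ) * Real.log (1 + (-1) / (n : ℝ))) atTop (𝓝 (-1)) :=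
      (Real.tendsto_mul_log_one_add_div_atTop (-1)).comp tendsto_natCast_atTop_atTop
    have hg : Tendsto
        (fun n : ℕ => ((n : ℝ) ^ 2) * Real.log (1 + (-1) / ((n : ℝ) ^ 2))
          + (n : ℝ) * Real.log (1 + 1 / (n : ℝ))
          - (n : ℝ) * Real.log (1 + (-1) / (n : ℝ))) atTop (𝓝 1) := by
      have hg' := (hA.add hB).sub hC
      have heq : (-1 : ℝ) + 1 - -1 = 1 := by norm_num
      rw [heq] at hg'
      exact hg'
    refine hg.congr' ?_
    filter_upwards [eventually_ge_atTop 2] with n hn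
    have hx : (2:ℝ) ≤ (n : ℝ) := by exact_mod_cast hn
    have hx0 : (0:ℝ) < (n : ℝ) := by linarith
    have hL : 0 < Real.log (n : ℝ) := Real.log_pos (by linarith)
    have e1 : Real.log (1 + (-1) / ((n : ℝ) ^ 2))
        = Real.log ((n : ℝ) + 1) + Real.log ((n : ℝ) - 1) - 2 * Real.log (n : ℝ) := by
      have he : (1:ℝ) + (-1) / ((n : ℝ) ^ 2) = (((n : ℝ) + 1) * ((n : ℝ) - 1)) / ((n : ℝ) ^ 2) := by
        field_simp
        ring
      rw [he, Real.log_div (by nlinarith) (by positivity),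
        Real.log_mul (by linarith) (by nlinarith), Real.log_pow]
      push_cast
      ring
    have e2 : Real.log (1 + 1 / (n : ℝ)) = Real.log ((n : ℝ) + 1) - Real.log (n : ℝ) := by
      rw [show (1:ℝ) + 1 / (n : ℝ) = ((n : ℝ) + 1) / (n : ℝ) by field_simp,
        Real.log_div (by linarith) (by linarith)]
    have e3 : Real.log (1 + (-1) / (n : ℝ)) = Real.log ((n : ℝ) - 1) - Real.log (n : ℝ) := by
      rw [show (1:ℝ) + (-1) / (n : ℝ) = ((n : ℝ) - 1) / (n : ℝ) by field_simp; ring,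
        Real.log_div (by nlinarith) (by linarith)]
    have hW : WHL n = (-Real.log (n : ℝ)) *
        (((n : ℝ) ^ 2) * (Real.log ((n : ℝ) + 1) + Real.log ((n : ℝ) - 1) - 2 * Real.log (n : ℝ))
          + (n : ℝ) * (Real.log ((n : ℝ) + 1) - Real.log (n : ℝ))
          - (n : ℝ) * (Real.log ((n : ℝ) - 1) - Real.log (n : ℝ))) := by
      unfold WHL
      ring
    have hne : -Real.log (n : ℝ) ≠ 0 := neg_ne_zero.mpr hL.ne'
    rw [e1, e2, e3, hW, mul_div_cancel_left₀ _ hne]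
  -- Part 4
  have hLatBot : Tendsto (fun n : ℕ => -Real.log (n : ℝ)) atTop atBot :=
    tendsto_neg_atBot_iff.mpr (Real.tendsto_log_atTop.comp tendsto_natCast_atTop_atTop)
  have hWbot : Tendsto (fun n : ℕ => WHL n) atTop atBot := by
    have hmul := h3.pos_mul_atBot one_pos hLatBot
    refine hmul.congr' ?_
    filter_upwards [eventually_ge_atTop 2] with n hn
    have hx : (2:ℝ) ≤ (n : ℝ) := by exact_mod_cast hn
    have hL : 0 < Real.log (n : ℝ) := Real.log_pos (by linarith)
    exact div_mul_cancel₀ _ (neg_ne_zero.mpr hL.ne')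
  refine ⟨h1, h2, h3, fun M => ?_⟩
  exact (hWbot.eventually (eventually_lt_atBot M)).exists
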